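/- Let D be a free semi-theory, P the initial semi-theory, and n, k ≥ 0. For every functor X : D → SSet, the commutative square of simplicial mapping complexes with top row Map_D(D̄_n^{k+1}, X) → Map_D(D̄_n^k, X), bottom row Map_P(sD̄_n^{k+1}, X) → Map_P(D̄_n^k, X) (all maps induced by the inclusions of subdiagrams and by restriction along P → D) is a pullback square of simplicial sets. -/

import Mathlib

open CategoryTheory Limits Topology Topology.Homotopy

noncomputable section

namespace SemiThPaper

/-! ### Weak homotopy equivalences -/

/-- The map induced by a continuous map on homotopy "groups" (sets for `N = Fin 0`). -/
def HomotopyGroup.map {X Y : Type} [TopologicalSpace X] [TopologicalSpace Y]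
    (f : C(X, Y)) (N : Type) (x : X) :
    HomotopyGroup N X x → HomotopyGroup N Y (f x) :=
  Quotient.map
    (fun g => ⟨f.comp g.1, fun y hy => by
      simp only [ContinuousMap.comp_apply]
      rw [g.2 y hy]⟩)
    (fun g h H => H.elim fun H => ⟨H.compContinuousMap f⟩)

/-- The map induced on path components. -/
def ZerothHomotopy.map {X Y : Type} [TopologicalSpace X] [TopologicalSpace Y]
    (f : C(X, Y)) : ZerothHomotopy X → ZerothHomotopy Y :=
  Quotient.map f (fun _ _ h => h.elim fun γ => ⟨γ.map f.continuous⟩)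

/-- A weak homotopy equivalence of topological spaces: a continuous map inducing a
bijection on path components and on all homotopy groups at all basepoints. -/
def IsWeakHomotopyEquiv {X Y : TopCat} (f : X ⟶ Y) : Prop :=
  Function.Bijective (ZerothHomotopy.map (f.hom : C(X, Y))) ∧
    ∀ (n : ℕ) (x : X), Function.Bijective (HomotopyGroup.map (f.hom : C(X, Y)) (Fin n) x)

/-- A weak equivalence of simplicial sets: a map whose geometric realization is a
weak homotopy equivalence. -/
def WeakEquiv {A B : SSet} (f : A ⟶ B) : Prop :=
  IsWeakHomotopyEquiv (SSet.toTop.map f)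


/-! ### Semi-theories -/

/-- The objects `[1], [2], [3], …` of a semi-theory, indexed by positive integers. -/
@[ext]
structure Ob : Type where
  val : ℕ+

instance : Coe ℕ+ Ob := ⟨Ob.mk⟩

/-- An (unpointed) semi-theory: a category with objects `[1], [2], …`
together with distinguished projection morphisms `p^n_k : [n] ⟶ [1]`, where `p^1_1 = 𝟙 [1]`. -/
structure SemiTheory : Type 1 where
  cat : Category.{0, 0} Ob
  proj : ∀ n : ℕ+, Fin n → @Quiver.Hom Ob cat.toCategoryStruct.toQuiver ⟨n⟩ ⟨1⟩
  proj_one : proj 1 ⟨0, Nat.one_pos⟩ = cat.toCategoryStruct.id ⟨1⟩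

/-- The category of diagrams of simplicial sets over (the underlying category of)
a semi-theory. -/
abbrev SemiTheory.Diag (S : SemiTheory) : Type 1 :=
  @CategoryTheory.Functor Ob S.cat SSet _

/-- The `n`-fold levelwise power of a simplicial set. -/
@[simps]
def finPow (n : ℕ+) (A : SSet) : SSet where
  obj m := Fin n → A.obj m
  map θ := ↾(fun a k => A.map θ (a k))

/-- The canonical comparison map `X[n] ⟶ X[1]^n` of a diagram over a semi-theory,
whose components are induced by the projections. -/
def SemiTheory.projFan (S : SemiTheory) (X : S.Diag) (n : ℕ+) :
    (letI := S.cat; (X.obj ⟨n⟩ ⟶ finPow n (X.obj ⟨1⟩))) :=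
  letI := S.cat
  { app := fun m => ↾(fun a k => (X.map (S.proj n k)).app m a)
    naturality := fun m m' θ => by
      refine ConcreteCategory.hom_ext _ _ fun a => ?_
      funext k
      exact types_congr_hom ((X.map (S.proj n k)).naturality θ) a }

/-- A strict algebra over a semi-theory: the comparison maps `X[n] ⟶ X[1]^n` are
isomorphisms for all `n > 1`. -/
def SemiTheory.IsStrictAlgebra (S : SemiTheory) (X : S.Diag) : Prop :=
  ∀ n : ℕ+, 1 < (n : ℕ) → IsIso (S.projFan X n)

/-- A homotopy algebra over a semi-theory: the comparison maps `X[n] ⟶ X[1]^n` are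
weak equivalences of simplicial sets for all `n > 1`. -/
def SemiTheory.IsHomotopyAlgebra (S : SemiTheory) (X : S.Diag) : Prop :=
  ∀ n : ℕ+, 1 < (n : ℕ) → WeakEquiv (S.projFan X n)

/-- A semi-theory is an algebraic theory if composition with the projections induces
bijections `Hom([m],[n]) ≅ Hom([m],[1])^n` for all `m` and all `n > 1`. -/
def SemiTheory.IsAlgebraic (S : SemiTheory) : Prop :=
  letI := S.cat
  ∀ (m n : ℕ+), 1 < (n : ℕ) →
    Function.Bijective (fun (f : (⟨m⟩ : Ob) ⟶ ⟨n⟩) (k : Fin n) => f ≫ S.proj n k)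

/-- The comparison map `X[n] ⟶ X[1]^n` for a diagram of simplicial sets over any
category equipped with objects `[n]` and projection morphisms. -/
def projFanAt {C : Type} [Category.{0} C] (o : ℕ+ → C) (p : ∀ n : ℕ+, Fin n → (o n ⟶ o 1))
    (X : C ⥤ SSet) (n : ℕ+) : X.obj (o n) ⟶ finPow n (X.obj (o 1)) where
  app m := ↾(fun a k => (X.map (p n k)).app m a)
  naturality m m' θ := by
    refine ConcreteCategory.hom_ext _ _ fun a => ?_
    funext k
    exact types_congr_hom ((X.map (p n k)).naturality θ) a

/-- Strictness of a diagram with respect to given objects and projections. -/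
def IsStrictAt {C : Type} [Category.{0} C] (o : ℕ+ → C)
    (p : ∀ n : ℕ+, Fin n → (o n ⟶ o 1)) (X : C ⥤ SSet) : Prop :=
  ∀ n : ℕ+, 1 < (n : ℕ) → IsIso (projFanAt o p X n)

/-- The homotopy-algebra condition for a diagram with respect to given objects
and projections. -/
def IsHomotopyAt {C : Type} [Category.{0} C] (o : ℕ+ → C)
    (p : ∀ n : ℕ+, Fin n → (o n ⟶ o 1)) (X : C ⥤ SSet) : Prop :=
  ∀ n : ℕ+, 1 < (n : ℕ) → WeakEquiv (projFanAt o p X n)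

/-! ### Free semi-theories -/

/-- Generating data for a free semi-theory: a family of free generators that are
not projections (the projections are added separately as free generators). -/
structure GenData : Type 1 where
  gen : ℕ+ → ℕ+ → Type

/-- The generating quiver of the free semi-theory on `G`: the generators of `G`
together with projection arrows `p^n_k : [n] → [1]` for `n > 1`
(the projection `p^1_1` is the identity, i.e. the empty path). -/
inductive Arr (G : GenData) : ℕ+ → ℕ+ → Type
  | gen {a b : ℕ+} : G.gen a b → Arr G a b
  | proj {n : ℕ+} (h : 1 < (n : ℕ)) (k : Fin n) : Arr G n 1

/-- The object type of the free semi-theory on `G` (a copy of `Ob`). -/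
def FreeOb (G : GenData) : Type := Ob

instance freeQuiver (G : GenData) : Quiver (FreeOb G) :=
  ⟨fun a b => Arr G (Ob.val a) (Ob.val b)⟩

/-- The free semi-theory on `G`, as a category: the paths category on the
generating quiver. -/
abbrev FreeST (G : GenData) := CategoryTheory.Paths (FreeOb G)

/-- The object `[n]` of the free semi-theory. -/
def FreeST.of (G : GenData) (n : ℕ+) : FreeST G := (⟨n⟩ : Ob)

/-- The generating projection arrow, as an arrow of the generating quiver. -/
def projArr (G : GenData) {n : ℕ+} (h : 1 < (n : ℕ)) (k : Fin n) :
    @Quiver.Hom (FreeOb G) _ (FreeST.of G n) (FreeST.of G 1) := Arr.proj h k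

/-- The projection `p^n_k` in the free semi-theory. -/
def projPath (G : GenData) (n : ℕ+) (k : Fin n) : FreeST.of G n ⟶ FreeST.of G 1 :=
  if h : 1 < (n : ℕ) then (projArr G h k).toPath
  else eqToHom (congrArg (FreeST.of G)
    (PNat.coe_injective (by
      rw [PNat.one_coe]
      exact le_antisymm (not_lt.1 h) n.pos)))

/-- The free semi-theory on `G`, as a semi-theory. -/
def freeSemiTheory (G : GenData) : SemiTheory where
  cat := inferInstanceAs (Category (FreeST G))
  proj n k := projPath G n k
  proj_one := by
    show projPath G 1 ⟨0, Nat.one_pos⟩ = _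
    rw [projPath, dif_neg (by norm_num)]
    rfl

/-- The initial semi-theory `P` has no generators besides the projections. -/
def emptyGen : GenData := ⟨fun _ _ => PEmpty⟩

/-- The underlying category of the initial semi-theory `P`. -/
abbrev PCat := FreeST emptyGen

/-- The initial semi-theory `P`: its only non-identity morphisms are the projections. -/
def PTheory : SemiTheory := freeSemiTheory emptyGen

/-- The action of the unique morphism of semi-theories `P ⟶ C` on generating arrows. -/
def jArr (G : GenData) : ∀ {a b : ℕ+}, Arr emptyGen a b →
    @Quiver.Path (FreeOb G) _ ((⟨a⟩ : Ob) : FreeST G) ((⟨b⟩ : Ob) : FreeST G)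
  | _, _, .gen α => α.elim
  | _, _, .proj h k => (projArr G h k).toPath

/-- The unique morphism of semi-theories `P ⟶ C` into a free semi-theory. -/
def Jfree (G : GenData) : PCat ⥤ FreeST G :=
  Paths.lift
    { obj := fun n => (n : FreeST G)
      map := fun {a b} e => jArr G e }

/-! ### The completion of a free semi-theory -/

/-- Trees representing the morphisms `[n] ⟶ [1]` of the completion `C̄` of a free
semi-theory: either a single edge labelled by a projection `p^n_k`, or a tree whose
lowest edge is labelled by a component `α_i` of a non-projection generator
`α : [m] ⟶ [r]` and which is obtained by grafting `m` smaller trees. -/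
inductive CTree (G : GenData) (n : ℕ+) : Type
  | proj (k : Fin n) : CTree G n
  | node {m r : ℕ+} (α : G.gen m r) (i : Fin r) (ts : Fin m → CTree G n) : CTree G n

/-- Morphisms `[n] ⟶ [m]` in the completion: `m`-tuples of trees. -/
def CompHom (G : GenData) (n m : ℕ+) : Type := Fin m → CTree G n

/-- Grafting: substituting the trees `T k` for the initial edges labelled `p^m_k`. -/
def CTree.graft {G : GenData} {n m : ℕ+} : CTree G m → CompHom G n m → CTree G n
  | .proj k, T => T k
  | .node α i ts, T => .node α i (fun j => (ts j).graft T)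

/-- The identity of the completion. -/
def compId (G : GenData) (n : ℕ+) : CompHom G n n := fun k => .proj k

/-- Composition in the completion, by grafting. -/
def compComp {G : GenData} {a b c : ℕ+} (T : CompHom G a b) (S : CompHom G b c) :
    CompHom G a c :=
  fun j => (S j).graft T

theorem CTree.graft_id {G : GenData} {m : ℕ+} (t : CTree G m) :
    t.graft (compId G m) = t := by
  induction t with
  | proj k => rfl
  | node α i ts ih =>
      simp only [CTree.graft]
      congr 1
      funext j
      exact ih j

theorem CTree.graft_graft {G : GenData} {a b c : ℕ+} (s : CTree G c)
    (U : CompHom G b c) (T : CompHom G a b) :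
    (s.graft U).graft T = s.graft (compComp T U) := by
  induction s with
  | proj k => rfl
  | node α i ts ih =>
      simp only [CTree.graft]
      congr 1
      funext j
      exact ih j

/-- The object type of the completion (a copy of `Ob`). -/
def CompOb (G : GenData) : Type := Ob

/-- The completion `C̄` of a free semi-theory, as a category. -/
instance compCategory (G : GenData) : Category (CompOb G) where
  Hom n m := CompHom G (Ob.val n) (Ob.val m)
  id n := compId G _
  comp f g := compComp f g
  id_comp f := funext fun j => CTree.graft_id _
  comp_id f := rfl
  assoc f g h := funext fun j => (CTree.graft_graft _ _ _).symm

/-- The object `[n]` of the completion. -/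
def CompOb.of (G : GenData) (n : ℕ+) : CompOb G := (⟨n⟩ : Ob)

/-- The projection `p̂^n_k` of the completion: a single edge labelled `p^n_k`. -/
def compProj (G : GenData) (n : ℕ+) (k : Fin n) : CompOb.of G n ⟶ CompOb.of G 1 :=
  fun _ => .proj k

/-- The completion, as a semi-theory. -/
def compSemiTheory (G : GenData) : SemiTheory where
  cat := inferInstanceAs (Category (CompOb G))
  proj n k := compProj G n k
  proj_one := by
    funext i
    have h0 : i = ⟨0, Nat.one_pos⟩ := Fin.ext (Nat.lt_one_iff.mp i.isLt)
    rw [h0]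
    rfl

/-- The completion functor `Φ` on generating arrows. -/
def phiArr (G : GenData) : ∀ {a b : ℕ+}, Arr G a b → CompHom G a b
  | _, _, .gen α => fun i => .node α i (fun k => .proj k)
  | _, _, .proj _ k => fun _ => .proj k

/-- The completion functor `Φ_C : C ⟶ C̄` of a free semi-theory. -/
def phi (G : GenData) : FreeST G ⥤ CompOb G :=
  Paths.lift
    { obj := fun n => (n : CompOb G)
      map := fun {a b} e => phiArr G e }

/-! ### Discrete simplicial sets, products, mapping complexes -/

/-- The discrete simplicial set on a type. -/
@[simps]
def disc (A : Type) : SSet where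
  obj _ := A
  map _ := ↾id

/-- The map of discrete simplicial sets induced by a function. -/
@[simps]
def disc.map {A B : Type} (f : A → B) : disc A ⟶ disc B where
  app _ := ↾f

/-- The diagram of (discrete) simplicial sets corepresented by the object `[n]`
of a semi-theory. -/
def SemiTheory.corep (S : SemiTheory) (n : ℕ+) : S.Diag :=
  letI := S.cat
  { obj := fun m => disc ((⟨n⟩ : Ob) ⟶ m)
    map := fun f => disc.map (fun g => g ≫ f)
    map_id := fun m => by
      apply NatTrans.ext
      funext x; refine ConcreteCategory.hom_ext _ _ fun (g : (⟨n⟩ : Ob) ⟶ m) => ?_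
      show g ≫ 𝟙 m = g
      simp
    map_comp := fun f f' => by
      apply NatTrans.ext
      funext x; refine ConcreteCategory.hom_ext _ _ fun (g : (⟨n⟩ : Ob) ⟶ _) => ?_
      show g ≫ (_ ≫ _) = _
      rw [← Category.assoc]
      rfl }

/-- Levelwise product of two simplicial sets. -/
@[simps]
def mulC (A K : SSet) : SSet where
  obj m := A.obj m × K.obj m
  map θ := ↾(fun p => (A.map θ p.1, K.map θ p.2))
  map_id m := by refine ConcreteCategory.hom_ext _ _ fun p => ?_; simp
  map_comp f g := by refine ConcreteCategory.hom_ext _ _ fun p => ?_; simp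

/-- `f × id` on levelwise products. -/
@[simps]
def mulC.mapLeft {A B : SSet} (f : A ⟶ B) (K : SSet) : mulC A K ⟶ mulC B K where
  app m := ↾(fun p => (f.app m p.1, p.2))
  naturality m m' θ := by
    refine ConcreteCategory.hom_ext _ _ fun (p : A.obj m × K.obj m) => ?_
    simp only [mulC_obj, mulC_map, types_comp_apply]
    show (f.app m' (A.map θ p.1), K.map θ p.2) = (B.map θ (f.app m p.1), K.map θ p.2)
    exact Prod.ext (FunctorToTypes.naturality f θ p.1) rfl

/-- `id × g` on levelwise products. -/
@[simps]
def mulC.mapRight (A : SSet) {K L : SSet} (g : K ⟶ L) : mulC A K ⟶ mulC A L where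
  app m := ↾(fun p => (p.1, g.app m p.2))
  naturality m m' θ := by
    refine ConcreteCategory.hom_ext _ _ fun (p : A.obj m × K.obj m) => ?_
    simp only [mulC_obj, mulC_map, types_comp_apply]
    show (A.map θ p.1, g.app m' (K.map θ p.2)) = (A.map θ p.1, L.map θ (g.app m p.2))
    exact Prod.ext rfl (FunctorToTypes.naturality g θ p.2)

theorem mulC.mapRight_id (A K : SSet) : mulC.mapRight A (𝟙 K) = 𝟙 (mulC A K) := by
  apply NatTrans.ext; funext x; refine ConcreteCategory.hom_ext _ _ fun p => ?_; rfl

theorem mulC.mapRight_comp (A : SSet) {K L M : SSet} (g : K ⟶ L) (h : L ⟶ M) :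
    mulC.mapRight A (g ≫ h) = mulC.mapRight A g ≫ mulC.mapRight A h := by
  apply NatTrans.ext; funext x; refine ConcreteCategory.hom_ext _ _ fun p => ?_; rfl

/-- Naturality, in applied form. -/
theorem natApply {C : Type} [Category C] {X Y : C ⥤ SSet} (f : X ⟶ Y)
    {c c' : C} (φ : c ⟶ c') (x : SimplexCategoryᵒᵖ) (a : (X.obj c).obj x) :
    (f.app c').app x ((X.map φ).app x a) = (Y.map φ).app x ((f.app c).app x a) :=
  types_congr_hom (NatTrans.congr_app (f.naturality φ) x) a

/-- The objectwise product of a diagram of simplicial sets with a constant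
simplicial set. -/
@[simps]
def prodConst {C : Type} [Category C] (X : C ⥤ SSet) (K : SSet) : C ⥤ SSet where
  obj c := mulC (X.obj c) K
  map f := mulC.mapLeft (X.map f) K
  map_id c := by
    apply NatTrans.ext; funext x; refine ConcreteCategory.hom_ext _ _ fun p => ?_
    show ((X.map (𝟙 c)).app x p.1, p.2) = p
    rw [X.map_id]
    rfl
  map_comp f g := by
    apply NatTrans.ext; funext x; refine ConcreteCategory.hom_ext _ _ fun p => ?_
    show ((X.map (f ≫ g)).app x p.1, p.2) = _
    rw [X.map_comp]
    rfl

/-- Functoriality of `prodConst` in the diagram variable. -/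
@[simps]
def prodConst.mapX {C : Type} [Category C] {X X' : C ⥤ SSet} (f : X ⟶ X') (K : SSet) :
    prodConst X K ⟶ prodConst X' K where
  app c := mulC.mapLeft (f.app c) K
  naturality c c' φ := by
    apply NatTrans.ext; funext x; refine ConcreteCategory.hom_ext _ _ fun p => ?_
    simp only [prodConst_obj, prodConst_map, NatTrans.comp_app, mulC.mapLeft_app,
      types_comp_apply]
    exact Prod.ext (natApply f φ x p.1) rfl

/-- Functoriality of `prodConst` in the constant variable. -/
@[simps]
def prodConst.mapK {C : Type} [Category C] (X : C ⥤ SSet) {K L : SSet} (g : K ⟶ L) :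
    prodConst X K ⟶ prodConst X L where
  app c := mulC.mapRight (X.obj c) g
  naturality c c' φ := by
    apply NatTrans.ext; funext x; refine ConcreteCategory.hom_ext _ _ fun p => ?_
    rfl

theorem prodConst.mapK_id {C : Type} [Category C] (X : C ⥤ SSet) (K : SSet) :
    prodConst.mapK X (𝟙 K) = 𝟙 (prodConst X K) := by
  apply NatTrans.ext; funext c
  exact mulC.mapRight_id _ _

theorem prodConst.mapK_comp {C : Type} [Category C] (X : C ⥤ SSet) {K L M : SSet}
    (g : K ⟶ L) (h : L ⟶ M) :
    prodConst.mapK X (g ≫ h) = prodConst.mapK X g ≫ prodConst.mapK X h := by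
  apply NatTrans.ext; funext c
  exact mulC.mapRight_comp _ _ _

/-- The standard simplex `Δ[k]`, for `k : SimplexCategoryᵒᵖ`. -/
def stdS (k : SimplexCategoryᵒᵖ) : SSet := SSet.stdSimplex.obj k.unop

/-- Functoriality of the standard simplex (contravariantly in `SimplexCategoryᵒᵖ`). -/
def stdMap {k l : SimplexCategoryᵒᵖ} (θ : k ⟶ l) : stdS l ⟶ stdS k :=
  SSet.stdSimplex.map θ.unop

theorem stdMap_id (k : SimplexCategoryᵒᵖ) : stdMap (𝟙 k) = 𝟙 (stdS k) :=
  CategoryTheory.Functor.map_id _ _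

theorem stdMap_comp {k l m : SimplexCategoryᵒᵖ} (θ : k ⟶ l) (η : l ⟶ m) :
    stdMap (θ ≫ η) = stdMap η ≫ stdMap θ :=
  CategoryTheory.Functor.map_comp _ _ _

/-- The simplicial mapping complex of two diagrams of simplicial sets: its
`m`-simplices are the natural transformations `X × Δ[m] ⟶ Y`. -/
def MapCx {C : Type} [Category C] (X Y : C ⥤ SSet) : SSet where
  obj m := prodConst X (stdS m) ⟶ Y
  map {m m'} θ := ↾(fun t => prodConst.mapK X (stdMap θ) ≫ t)
  map_id m := by
    refine ConcreteCategory.hom_ext _ _ fun t => ?_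
    simp [stdMap_id, prodConst.mapK_id]
  map_comp θ η := by
    refine ConcreteCategory.hom_ext _ _ fun t => ?_
    simp [stdMap_comp, prodConst.mapK_comp]

/-- Precomposition on mapping complexes. -/
def MapCx.pre {C : Type} [Category C] {X X' : C ⥤ SSet} (f : X' ⟶ X) (Y : C ⥤ SSet) :
    MapCx X Y ⟶ MapCx X' Y where
  app m := ↾(fun t => prodConst.mapX f (stdS m) ≫ t)
  naturality m m' θ := by
    refine ConcreteCategory.hom_ext _ _ fun t => ?_
    rfl

/-- Postcomposition on mapping complexes. -/
def MapCx.post {C : Type} [Category C] (X : C ⥤ SSet) {Y Y' : C ⥤ SSet} (g : Y ⟶ Y') :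
    MapCx X Y ⟶ MapCx X Y' where
  app m := ↾(fun t => t ≫ g)
  naturality m m' θ := by
    refine ConcreteCategory.hom_ext _ _ fun t => ?_
    rfl

/-- Restriction of mapping complexes along a functor. -/
def MapCx.whisk {C D : Type} [Category C] [Category D] (F : D ⥤ C) (X Y : C ⥤ SSet) :
    MapCx X Y ⟶ MapCx (F ⋙ X) (F ⋙ Y) where
  app m := ↾(fun t =>
    (show prodConst (F ⋙ X) (stdS m) ⟶ F ⋙ Y from CategoryTheory.Functor.whiskerLeft F t))
  naturality m m' θ := by
    refine ConcreteCategory.hom_ext _ _ fun t => ?_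
    rfl

/-- The simplicial mapping complex of two simplicial sets: its `m`-simplices are
the maps `A × Δ[m] ⟶ B`. -/
def sMap (A B : SSet) : SSet where
  obj m := mulC A (stdS m) ⟶ B
  map {m m'} θ := ↾(fun t => mulC.mapRight A (stdMap θ) ≫ t)
  map_id m := by
    refine ConcreteCategory.hom_ext _ _ fun t => ?_
    simp [stdMap_id, mulC.mapRight_id]
  map_comp θ η := by
    refine ConcreteCategory.hom_ext _ _ fun t => ?_
    simp [stdMap_comp, mulC.mapRight_comp]

/-- Precomposition on simplicial mapping complexes. -/
def sMap.pre {A A' : SSet} (f : A' ⟶ A) (B : SSet) : sMap A B ⟶ sMap A' B where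
  app m := ↾(fun t => mulC.mapLeft f (stdS m) ≫ t)
  naturality m m' θ := by
    refine ConcreteCategory.hom_ext _ _ fun t => ?_
    rfl

/-- Postcomposition on simplicial mapping complexes. -/
def sMap.post (A : SSet) {B B' : SSet} (g : B ⟶ B') : sMap A B ⟶ sMap A B' where
  app m := ↾(fun t => t ≫ g)
  naturality m m' θ := by
    refine ConcreteCategory.hom_ext _ _ fun t => ?_
    rfl

/-! ### Decompositions of morphisms of a free semi-theory -/

/-- Whether a generating arrow is a generator of `G` (as opposed to a projection). -/
def Arr.isGen {G : GenData} : ∀ {a b : ℕ+}, Arr G a b → Prop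
  | _, _, .gen _ => True
  | _, _, .proj _ _ => False

/-- A morphism `φ = α_k ∘ ⋯ ∘ α_1` of a free semi-theory (a path in the generating
quiver) starts with a non-projection: `α_1` is not a projection. -/
def startsNonProj {G : GenData} : ∀ {a b : FreeOb G}, Quiver.Path a b → Prop
  | _, _, .nil => False
  | _, _, .cons .nil e => Arr.isGen e
  | _, _, .cons (.cons p e') _ => startsNonProj (Quiver.Path.cons p e')

/-- The first `j` arrows of a path (together with their target). -/
def pathTake {V : Type} [Quiver.{1} V] {a : V} : ∀ {b : V}, Quiver.Path a b → ℕ → Σ c : V, Quiver.Path a c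
  | _, .nil, _ => ⟨a, .nil⟩
  | b, .cons p e, j => if j ≤ p.length then pathTake p j else ⟨b, .cons p e⟩

/-! ### The diagram `D̄_n` and its filtrations -/

/-- The `D`-diagram `D̄_n` with `D̄_n[m] = Hom_{D̄}([n],[m])`, where the `D`-action
is given by composition via the completion functor `Φ`. -/
def barDn (G : GenData) (n : ℕ+) : FreeST G ⥤ SSet where
  obj m := disc (CompOb.of G n ⟶ (phi G).obj m)
  map {a b} ψ := disc.map (fun T => T ≫ (phi G).map ψ)
  map_id a := by
    apply NatTrans.ext
    funext x; refine ConcreteCategory.hom_ext _ _ fun (T : CompOb.of G n ⟶ (phi G).obj a) => ?_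
    show T ≫ (phi G).map (𝟙 a) = T
    erw [CategoryTheory.Functor.map_id, Category.comp_id]
  map_comp {a b c} ψ ψ' := by
    apply NatTrans.ext
    funext x; refine ConcreteCategory.hom_ext _ _ fun (T : CompOb.of G n ⟶ (phi G).obj a) => ?_
    show T ≫ (phi G).map (ψ ≫ ψ') = (T ≫ (phi G).map ψ) ≫ (phi G).map ψ'
    erw [CategoryTheory.Functor.map_comp, Category.assoc]

/-- The filtration of `D̄_n` by sub-`D`-diagrams:
`D̄_n^0 = D_n` (the image of the corepresented diagram) and `D̄_n^{k+1}` is the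
smallest sub-`D`-diagram containing all tuples of elements of `D̄_n^k[1]`. -/
def Filt (G : GenData) (n : ℕ+) : ℕ → ∀ m : ℕ+, Set (CompHom G n m)
  | 0, m => {T | ∃ ψ : FreeST.of G n ⟶ FreeST.of G m, T = (phi G).map ψ}
  | k+1, m => {T | ∃ (m' : ℕ+) (S : CompHom G n m')
      (ψ : FreeST.of G m' ⟶ FreeST.of G m),
      (∀ j : Fin m', (fun _ : Fin 1 => S j) ∈ Filt G n k 1) ∧
        T = (S : CompOb.of G n ⟶ CompOb.of G m') ≫ (phi G).map ψ}

/-- The filtration of `D̄_n` by sub-`P`-diagrams: `sD̄_n^0 = D_n` and `sD̄_n^{k+1}` is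
the smallest sub-`P`-diagram containing all tuples of elements of `D̄ₙ^k[1]`. -/
def sFilt (G : GenData) (n : ℕ+) : ℕ → ∀ m : ℕ+, Set (CompHom G n m)
  | 0, m => Filt G n 0 m
  | k+1, m => {T | ∀ j : Fin m, (fun _ : Fin 1 => T j) ∈ Filt G n k 1}

theorem Filt.closed (G : GenData) (n : ℕ+) (k : ℕ) {a b : ℕ+}
    {T : CompOb.of G n ⟶ CompOb.of G a} (hT : T ∈ Filt G n k a)
    (ψ : FreeST.of G a ⟶ FreeST.of G b) : T ≫ (phi G).map ψ ∈ Filt G n k b := by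
  cases k with
  | zero =>
      obtain ⟨ψ₀, rfl⟩ := hT
      exact ⟨ψ₀ ≫ ψ, by rw [CategoryTheory.Functor.map_comp]; rfl⟩
  | succ k =>
      obtain ⟨m', S, ψ₁, hS, rfl⟩ := hT
      exact ⟨m', S, ψ₁ ≫ ψ, hS, by erw [CategoryTheory.Functor.map_comp, Category.assoc]; rfl⟩

theorem phi_map_toPath (G : GenData) {a b : FreeOb G}
    (e : @Quiver.Hom (FreeOb G) _ a b) :
    (phi G).map e.toPath = phiArr G e :=
  Paths.lift_toPath _ _

theorem Filt.comp_proj (G : GenData) (n : ℕ+) (k : ℕ) {m : ℕ+} {T : CompHom G n m}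
    (hT : T ∈ Filt G n k m) (j : Fin m) : (fun _ : Fin 1 => T j) ∈ Filt G n k 1 := by
  by_cases h : 1 < (m : ℕ)
  · have hc := Filt.closed G n k hT (projPath G m j)
    have he : (T : CompOb.of G n ⟶ CompOb.of G m) ≫ (phi G).map (projPath G m j)
        = (fun _ : Fin 1 => T j) := by
      unfold projPath
      rw [dif_pos h]
      rw [phi_map_toPath G (projArr G h j)]
      rfl
    erw [he] at hc; exact hc
  · have hm : m = 1 := PNat.coe_injective (by
      rw [PNat.one_coe]
      exact le_antisymm (not_lt.1 h) m.pos)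
    subst hm
    have ht : (fun _ : Fin 1 => T j) = T := by
      funext i
      congr 1
      exact Fin.ext (by
        rw [Nat.lt_one_iff.mp i.isLt, Nat.lt_one_iff.mp j.isLt])
    rwa [ht]

theorem sFilt.closed_arr (G : GenData) (n : ℕ+) (k : ℕ) {c b : ℕ+}
    {T : CompHom G n c} (hT : T ∈ sFilt G n k c) (e : Arr emptyGen c b) :
    (T : CompOb.of G n ⟶ CompOb.of G c) ≫ (phi G).map (jArr G e) ∈ sFilt G n k b := by
  cases e with
  | gen α => exact α.elim
  | proj h j =>
      have h1 : (phi G).map (jArr G (Arr.proj h j)) = phiArr G (Arr.proj h j) := by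
        show (phi G).map (projArr G h j).toPath = _
        exact phi_map_toPath G _
      rw [h1]
      show (fun _ : Fin 1 => T j) ∈ sFilt G n k 1
      cases k with
      | zero => exact Filt.comp_proj G n 0 hT j
      | succ k' => intro i; exact hT j

theorem sFilt.closed (G : GenData) (n : ℕ+) (k : ℕ) {a b : PCat}
    {T : CompOb.of G n ⟶ CompOb.of G (Ob.val a)} (hT : T ∈ sFilt G n k (Ob.val a))
    (ψ : a ⟶ b) :
    T ≫ (phi G).map ((Jfree G).map ψ) ∈ sFilt G n k (Ob.val b) := by
  change @Quiver.Path (FreeOb emptyGen) _ a b at ψ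
  induction ψ with
  | nil => exact hT
  | cons p e ih =>
      have h1 : (phi G).map ((Jfree G).map (Quiver.Path.cons p e))
          = (phi G).map ((Jfree G).map p) ≫ (phi G).map (jArr G e) := by
        show (phi G).map ((Jfree G).map (p ≫ Quiver.Hom.toPath e)) = _
        have hj : (Jfree G).map (Quiver.Hom.toPath e) = jArr G e := Paths.lift_toPath _ _
        exact (congrArg (phi G).map (((Jfree G).map_comp p _).trans
          (congrArg ((Jfree G).map p ≫ ·) hj))).trans ((phi G).map_comp _ _)
      have h3 : T ≫ (phi G).map ((Jfree G).map (Quiver.Path.cons p e))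
          = (T ≫ (phi G).map ((Jfree G).map p)) ≫ (phi G).map (jArr G e) :=
        (congrArg (T ≫ ·) h1).trans (Category.assoc _ _ _).symm
      exact (congrArg (fun t => t ∈ sFilt G n k _) h3).mpr (sFilt.closed_arr G n k ih e)

/-- The sub-`D`-diagram `D̄_n^k` of `D̄_n`. -/
def FiltDiag (G : GenData) (n : ℕ+) (k : ℕ) : FreeST G ⥤ SSet where
  obj m := disc (Filt G n k (Ob.val m))
  map {a b} ψ := disc.map (fun T => ⟨T.1 ≫ (phi G).map ψ, Filt.closed G n k T.2 ψ⟩)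
  map_id a := by
    apply NatTrans.ext
    funext x; refine ConcreteCategory.hom_ext _ _ fun (T : Filt G n k (Ob.val a)) => ?_
    apply Subtype.ext
    show T.1 ≫ (phi G).map (𝟙 a) = T.1
    erw [CategoryTheory.Functor.map_id, Category.comp_id]
  map_comp {a b c} ψ ψ' := by
    apply NatTrans.ext
    funext x; refine ConcreteCategory.hom_ext _ _ fun (T : Filt G n k (Ob.val a)) => ?_
    apply Subtype.ext
    show T.1 ≫ (phi G).map (ψ ≫ ψ') = (T.1 ≫ (phi G).map ψ) ≫ (phi G).map ψ'
    erw [CategoryTheory.Functor.map_comp, Category.assoc]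

/-- The sub-`P`-diagram `sD̄_n^k` of `D̄_n`. -/
def sFiltDiag (G : GenData) (n : ℕ+) (k : ℕ) : PCat ⥤ SSet where
  obj m := disc (sFilt G n k (Ob.val m))
  map {a b} ψ := disc.map (fun T => ⟨T.1 ≫ (phi G).map ((Jfree G).map ψ),
    sFilt.closed G n k T.2 ψ⟩)
  map_id a := by
    apply NatTrans.ext
    funext x; refine ConcreteCategory.hom_ext _ _ fun (T : sFilt G n k (Ob.val a)) => ?_
    apply Subtype.ext
    show T.1 ≫ (phi G).map ((Jfree G).map (𝟙 a)) = T.1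
    erw [CategoryTheory.Functor.map_id, Category.comp_id]
  map_comp {a b c} ψ ψ' := by
    apply NatTrans.ext
    funext x; refine ConcreteCategory.hom_ext _ _ fun (T : sFilt G n k (Ob.val a)) => ?_
    apply Subtype.ext
    show T.1 ≫ (phi G).map ((Jfree G).map (ψ ≫ ψ')) =
      (T.1 ≫ (phi G).map ((Jfree G).map ψ)) ≫ (phi G).map ((Jfree G).map ψ')
    erw [CategoryTheory.Functor.map_comp, CategoryTheory.Functor.map_comp, Category.assoc]


theorem Filt.mono (G : GenData) (n : ℕ+) (k : ℕ) (m : ℕ+) :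
    Filt G n k m ⊆ Filt G n (k+1) m := by
  intro T hT
  exact ⟨m, T, 𝟙 _, fun j => Filt.comp_proj G n k hT j,
    by erw [CategoryTheory.Functor.map_id, Category.comp_id]⟩

theorem Filt.subset_sFilt (G : GenData) (n : ℕ+) (k : ℕ) (m : ℕ+) :
    Filt G n k m ⊆ sFilt G n (k+1) m :=
  fun _ hT j => Filt.comp_proj G n k hT j

theorem sFilt.subset_Filt (G : GenData) (n : ℕ+) (k : ℕ) (m : ℕ+) :
    sFilt G n (k+1) m ⊆ Filt G n (k+1) m := by
  intro T hT
  exact ⟨m, T, 𝟙 _, hT, by erw [CategoryTheory.Functor.map_id, Category.comp_id]⟩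

/-- Restriction of a `D`-diagram to a `P`-diagram. -/
def resP (G : GenData) (X : FreeST G ⥤ SSet) : PCat ⥤ SSet := Jfree G ⋙ X

/-- The inclusion `D̄_n^k ⟶ D̄_n^{k+1}` of sub-`D`-diagrams. -/
def filtIncl (G : GenData) (n : ℕ+) (k : ℕ) : FiltDiag G n k ⟶ FiltDiag G n (k+1) where
  app m := disc.map (Set.inclusion (Filt.mono G n k (Ob.val m)))
  naturality a b ψ := by
    apply NatTrans.ext
    funext x; refine ConcreteCategory.hom_ext _ _ fun T => ?_
    apply Subtype.ext
    rfl

/-- The inclusion `D̄_n^k ⟶ sD̄_n^{k+1}` of sub-`P`-diagrams. -/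
def filtInclS (G : GenData) (n : ℕ+) (k : ℕ) :
    resP G (FiltDiag G n k) ⟶ sFiltDiag G n (k+1) where
  app m := disc.map (Set.inclusion (Filt.subset_sFilt G n k (Ob.val m)))
  naturality a b ψ := by
    apply NatTrans.ext
    funext x; refine ConcreteCategory.hom_ext _ _ fun T => ?_
    apply Subtype.ext
    rfl

/-- The inclusion `sD̄_n^{k+1} ⟶ D̄_n^{k+1}` of sub-`P`-diagrams. -/
def sFiltIncl (G : GenData) (n : ℕ+) (k : ℕ) :
    sFiltDiag G n (k+1) ⟶ resP G (FiltDiag G n (k+1)) where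
  app m := disc.map (Set.inclusion (sFilt.subset_Filt G n k (Ob.val m)))
  naturality a b ψ := by
    apply NatTrans.ext
    funext x; refine ConcreteCategory.hom_ext _ _ fun T => ?_
    apply Subtype.ext
    rfl



/-! ### Auxiliary material for Statement 13 -/


variable {G : GenData} {n : ℕ+}

theorem phi_cons {a b c : FreeST G} (p : a ⟶ b) (e : @Quiver.Hom (FreeOb G) _ b c) :
    (phi G).map (Quiver.Path.cons p e) = (phi G).map p ≫ phiArr G e := by
  rw [show Quiver.Path.cons p e = p ≫ Quiver.Hom.toPath e from rfl,
    Functor.map_comp]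
  exact congrArg (fun t => (phi G).map p ≫ t) (phi_map_toPath G e)

theorem projPath_eq {a : ℕ+} (h : 1 < (a : ℕ)) (j : Fin a) :
    projPath G a j = (projArr G h j).toPath := by
  rw [projPath, dif_pos h]

theorem node_inj {a r a' r' : ℕ+} {α : G.gen a r} {α' : G.gen a' r'} {i : Fin r} {i' : Fin r'}
    {ts : Fin a → CTree G n} {ts' : Fin a' → CTree G n}
    (h : CTree.node α i ts = CTree.node α' i' ts') :
    a = a' ∧ r = r' ∧ HEq α α' ∧ HEq i i' ∧ HEq ts ts' := by
  injection h with h1 h2 h3 h4 h5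
  exact ⟨h1, h2, h3, h4, h5⟩


variable {G : GenData} {n : ℕ+}

theorem L0 : ∀ {v : FreeST G} (χ : FreeST.of G n ⟶ v) (j : Fin (Ob.val v))
    {a r : ℕ+} (α : G.gen a r) (i : Fin r) (S₀ : CompHom G n a),
    ((phi G).map χ : CompHom G n (Ob.val v)) j = CTree.node α i S₀ →
    ∃ χ₀ : FreeST.of G n ⟶ FreeST.of G a, S₀ = (phi G).map χ₀ := by
  intro v χ
  change @Quiver.Path (FreeOb G) _ _ _ at χ
  induction χ with
  | nil =>
      intro j a r α i S₀ h
      exact absurd h (fun h => by cases h)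
  | @cons w c p e ih =>
      intro j a r α i S₀ h
      obtain ⟨wv⟩ := w
      obtain ⟨cv⟩ := c
      change Arr G wv cv at e
      cases e with
      | gen β =>
          -- ((phi G).map (p.cons (gen β))) j = node β j (S ≫ ... ) here S is none; it's Φp
          -- h : CTree.node β j ((phi G).map p) = node α i S₀ (after graft-free computation)
          have h' : CTree.node β j ((phi G).map p : CompHom G n wv) = CTree.node α i S₀ := h
          obtain ⟨h1, h2, h3, h4, h5⟩ := node_inj h'
          subst h1
          exact ⟨p, (eq_of_heq h5).symm⟩
      | proj hlt j' =>
          exact ih j' α i S₀ h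


variable {G : GenData} {n : ℕ+}

theorem L1 (k : ℕ)
    (IHk : ∀ {a r : ℕ+} (α : G.gen a r) (i : Fin r) (S₀ : CompHom G n a),
      (fun _ : Fin 1 => CTree.node α i S₀) ∈ Filt G n k 1 → S₀ ∈ Filt G n k a) :
    ∀ {v : FreeST G} {b : ℕ+} (S : CompHom G n b)
    (hS : ∀ l : Fin b, (fun _ : Fin 1 => S l) ∈ Filt G n k 1)
    (χ : FreeST.of G b ⟶ v) (j : Fin (Ob.val v))
    {a r : ℕ+} (α : G.gen a r) (i : Fin r) (S₀ : CompHom G n a),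
    (((phi G).map χ : CompHom G b (Ob.val v)) j).graft S = CTree.node α i S₀ →
    S₀ ∈ Filt G n (k+1) a := by
  intro v b S hS χ
  change @Quiver.Path (FreeOb G) _ _ _ at χ
  induction χ with
  | nil =>
      intro j a r α i S₀ h
      have hm : (fun _ : Fin 1 => CTree.node α i S₀) ∈ Filt G n k 1 := by
        rw [show CTree.node α i S₀ = S j from h.symm]
        exact hS j
      exact Filt.mono G n k a (IHk α i S₀ hm)
  | @cons w c p e ih =>
      intro j a r α i S₀ h
      obtain ⟨wv⟩ := w
      obtain ⟨cv⟩ := c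
      change Arr G wv cv at e
      cases e with
      | gen β =>
          have h' : CTree.node β j (fun l => (((phi G).map p : CompHom G b wv) l).graft S)
              = CTree.node α i S₀ := h
          obtain ⟨h1, h2, h3, h4, h5⟩ := node_inj h'
          subst h1
          exact ⟨b, S, p, hS, (eq_of_heq h5).symm⟩
      | proj hlt j' =>
          exact ih j' α i S₀ h

theorem Hlem : ∀ (k : ℕ) {a r : ℕ+} (α : G.gen a r) (i : Fin r) (S₀ : CompHom G n a),
    (fun _ : Fin 1 => CTree.node α i S₀) ∈ Filt G n k 1 → S₀ ∈ Filt G n k a := by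
  intro k
  induction k with
  | zero =>
      intro a r α i S₀ hT
      obtain ⟨ψ, he⟩ := hT
      obtain ⟨χ₀, h0⟩ := L0 ψ ⟨0, Nat.one_pos⟩ α i S₀ (congrFun he ⟨0, Nat.one_pos⟩).symm
      exact ⟨χ₀, h0⟩
  | succ k ihk =>
      intro a r α i S₀ hT
      obtain ⟨b, S, ψ, hS, he⟩ := hT
      exact L1 k (fun α i S₀ h => ihk α i S₀ h) S hS ψ ⟨0, Nat.one_pos⟩ α i S₀
        (congrFun he ⟨0, Nat.one_pos⟩).symm



theorem cons_eq_comp {G : GenData} {a b c : FreeST G} (p : a ⟶ b)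
    (e : @Quiver.Hom (FreeOb G) _ b c) :
    Quiver.Path.cons p e = p ≫ Quiver.Hom.toPath (V := FreeOb G) e := rfl

section VSec

variable {G : GenData} {n : ℕ+} {k : ℕ} {X : FreeST G ⥤ SSet} {y : SimplexCategoryᵒᵖ}
variable (V : ∀ (a : ℕ+) (S : CompHom G n a), S ∈ sFilt G n (k+1) a → (X.obj (FreeST.of G a)).obj y)

theorem Vc {a : ℕ+} {S S' : CompHom G n a} (h : S = S')
    {h1 : S ∈ sFilt G n (k+1) a} {h2 : S' ∈ sFilt G n (k+1) a} :
    V a S h1 = V a S' h2 := by subst h; rfl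

variable
  (hP : ∀ (a : ℕ+) (S : CompHom G n a) (hS : S ∈ sFilt G n (k+1) a)
    (h : 1 < (a : ℕ)) (j : Fin a) (h2 : (fun _ : Fin 1 => S j) ∈ sFilt G n (k+1) 1),
    (X.map (projPath G a j)).app y (V a S hS) = V 1 (fun _ => S j) h2)
  (hD : ∀ (a b : ℕ+) (R : CompHom G n a) (_ : R ∈ Filt G n k a)
    (h1 : R ∈ sFilt G n (k+1) a) (χ : FreeST.of G a ⟶ FreeST.of G b)
    (h2 : ((R : CompOb.of G n ⟶ CompOb.of G a) ≫ (phi G).map χ : CompHom G n b) ∈ sFilt G n (k+1) b),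
    (X.map χ).app y (V a R h1) = V b ((R : CompOb.of G n ⟶ CompOb.of G a) ≫ (phi G).map χ) h2)

include hP hD in
theorem KL : ∀ {v : FreeST G} {b : ℕ+} (S : CompHom G n b) (hS : S ∈ sFilt G n (k+1) b)
    (ψ : FreeST.of G b ⟶ v)
    (hT : ((S : CompOb.of G n ⟶ CompOb.of G b) ≫ (phi G).map ψ : CompHom G n (Ob.val v))
      ∈ sFilt G n (k+1) (Ob.val v)),
    (X.map ψ).app y (V b S hS)
      = V (Ob.val v) ((S : CompOb.of G n ⟶ CompOb.of G b) ≫ (phi G).map ψ) hT := by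
  intro v b S hS ψ
  change @Quiver.Path (FreeOb G) _ _ _ at ψ
  induction ψ with
  | nil =>
      intro hT
      have h1 : (X.map (Quiver.Path.nil : FreeST.of G b ⟶ FreeST.of G b)) = 𝟙 _ := X.map_id _
      erw [h1]
      exact Vc V rfl
  | @cons w c p e ih =>
      intro hT
      obtain ⟨wv⟩ := w
      obtain ⟨cv⟩ := c
      change Arr G wv cv at e
      change Arr G _ _ at e
      cases e with
      | gen α =>
          have hnode : (fun _ : Fin 1 =>
              CTree.node α ⟨0, cv.2⟩ ((S : CompOb.of G n ⟶ CompOb.of G b) ≫ (phi G).map p))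
              ∈ Filt G n k 1 := hT ⟨0, cv.2⟩
          have hR : ((S : CompOb.of G n ⟶ CompOb.of G b) ≫ (phi G).map p) ∈ Filt G n k wv :=
            Hlem k α ⟨0, cv.2⟩ _ hnode
          have hRs := Filt.subset_sFilt G n k wv hR
          have hE : (((S : CompOb.of G n ⟶ CompOb.of G b) ≫ (phi G).map p
                : CompOb.of G n ⟶ CompOb.of G wv) ≫ (phi G).map (Quiver.Hom.toPath (V := FreeOb G) (Arr.gen α))
                : CompHom G n cv)
              = (S : CompOb.of G n ⟶ CompOb.of G b) ≫ (phi G).map (Quiver.Path.cons p (Arr.gen α)) := by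
            erw [phi_map_toPath]
            rfl
          have hE2 : (((S : CompOb.of G n ⟶ CompOb.of G b) ≫ (phi G).map p
                : CompOb.of G n ⟶ CompOb.of G wv) ≫ (phi G).map (Quiver.Hom.toPath (V := FreeOb G) (Arr.gen α))
                : CompHom G n cv) ∈ sFilt G n (k+1) cv := hE ▸ hT
          conv_lhs => erw [cons_eq_comp p (Arr.gen α), X.map_comp, NatTrans.comp_app,
            types_comp_apply]
          erw [ih hRs]
          erw [hD wv cv _ hR hRs (Quiver.Hom.toPath (V := FreeOb G) (Arr.gen α)) hE2]
          exact Vc V hE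
      | proj hlt j =>
          cases p with
          | nil =>
              conv_lhs => erw [show Quiver.Path.cons Quiver.Path.nil (Arr.proj hlt j)
                = projPath G b j from (projPath_eq hlt j).symm]
              erw [hP b S hS hlt j hT]
              exact Vc V rfl
          | @cons w1 c1 p₁ e₁ =>
              obtain ⟨w1v⟩ := w1
              change Arr G _ _ at e₁
              cases e₁ with
              | proj h2 j2 => exact absurd hlt (by simp)
              | gen β =>
                  have hnode : (fun _ : Fin 1 => CTree.node β j
                      ((S : CompOb.of G n ⟶ CompOb.of G b) ≫ (phi G).map p₁))
                      ∈ Filt G n k 1 := hT ⟨0, Nat.one_pos⟩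
                  have hR1 : ((S : CompOb.of G n ⟶ CompOb.of G b) ≫ (phi G).map p₁)
                      ∈ Filt G n k w1v := Hlem k β j _ hnode
                  have hE : (((S : CompOb.of G n ⟶ CompOb.of G b) ≫ (phi G).map p₁
                        : CompOb.of G n ⟶ CompOb.of G w1v)
                        ≫ (phi G).map (Quiver.Hom.toPath (V := FreeOb G) (Arr.gen β))
                        : CompHom G n wv)
                      = (S : CompOb.of G n ⟶ CompOb.of G b)
                        ≫ (phi G).map (Quiver.Path.cons p₁ (Arr.gen β)) := by
                    erw [phi_map_toPath]
                    rfl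
                  have hR : ((S : CompOb.of G n ⟶ CompOb.of G b)
                      ≫ (phi G).map (Quiver.Path.cons p₁ (Arr.gen β))) ∈ Filt G n k wv :=
                    hE ▸ Filt.closed G n k hR1 (Quiver.Hom.toPath (V := FreeOb G) (Arr.gen β))
                  have hRs := Filt.subset_sFilt G n k wv hR
                  conv_lhs => erw [cons_eq_comp (Quiver.Path.cons p₁ (Arr.gen β)) (Arr.proj hlt j), X.map_comp,
                    NatTrans.comp_app, types_comp_apply]
                  erw [ih hRs]
                  conv_lhs => erw [show Quiver.Hom.toPath (V := FreeOb G) (Arr.proj hlt j)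
                    = projPath G wv j from (projPath_eq hlt j).symm]
                  erw [hP wv _ hRs hlt j hT]
                  exact Vc V rfl

include hP hD in
theorem Elem : ∀ {v : FreeST G} {b b' : ℕ+} (S : CompHom G n b) (S' : CompHom G n b')
    (hS : S ∈ sFilt G n (k+1) b) (hS' : S' ∈ sFilt G n (k+1) b')
    (ψ : FreeST.of G b ⟶ v) (ψ' : FreeST.of G b' ⟶ v)
    (he : ((S : CompOb.of G n ⟶ CompOb.of G b) ≫ (phi G).map ψ : CompHom G n (Ob.val v))
        = (S' : CompOb.of G n ⟶ CompOb.of G b') ≫ (phi G).map ψ'),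
    (X.map ψ).app y (V b S hS) = (X.map ψ').app y (V b' S' hS') := by
  intro v b b' S S' hS hS' ψ
  change @Quiver.Path (FreeOb G) _ _ _ at ψ
  induction ψ with
  | nil =>
      intro ψ' he
      erw [KL V hP hD S' hS' ψ' (he ▸ hS)]
      have h1 : (X.map (Quiver.Path.nil : FreeST.of G b ⟶ FreeST.of G b)) = 𝟙 _ := X.map_id _
      erw [h1]
      exact Vc V he
  | @cons w c p e ih =>
      intro ψ' he
      change @Quiver.Path (FreeOb G) _ _ _ at ψ'
      cases ψ' with
      | nil =>
          erw [KL V hP hD S hS (Quiver.Path.cons p e) (he.symm ▸ hS')]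
          have h1 : (X.map (Quiver.Path.nil : FreeST.of G b' ⟶ FreeST.of G b')) = 𝟙 _ :=
            X.map_id _
          erw [h1]
          exact Vc V he
      | @cons w' c' p' e' =>
          obtain ⟨cv⟩ := c
          obtain ⟨wv⟩ := w
          obtain ⟨w'v⟩ := w'
          change Arr G _ _ at e
          cases e with
          | gen α =>
              change Arr G _ _ at e'
              cases e' with
              | gen α' =>
                  have h' : CTree.node α ⟨0, cv.2⟩
                        ((S : CompOb.of G n ⟶ CompOb.of G b) ≫ (phi G).map p)
                      = CTree.node α' ⟨0, cv.2⟩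
                        ((S' : CompOb.of G n ⟶ CompOb.of G b') ≫ (phi G).map p') :=
                    congrFun he ⟨0, cv.2⟩
                  obtain ⟨h1, h2, h3, h4, h5⟩ := node_inj h'
                  subst h1
                  have hα := eq_of_heq h3
                  subst hα
                  have hR := eq_of_heq h5
                  conv_lhs => erw [cons_eq_comp p (Arr.gen α), X.map_comp,
                    NatTrans.comp_app, types_comp_apply]
                  conv_rhs => erw [cons_eq_comp p' (Arr.gen α), X.map_comp,
                    NatTrans.comp_app, types_comp_apply]
                  erw [ih p' hR]
              | proj hlt' j' =>
                  cases p' with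
                  | nil =>
                      have hT' : (fun _ : Fin 1 => S' j') ∈ sFilt G n (k+1) 1 :=
                        fun _ => hS' j'
                      erw [KL V hP hD S hS (Quiver.Path.cons p (Arr.gen α)) (he.symm ▸ hT')]
                      conv_rhs => erw [show Quiver.Path.cons Quiver.Path.nil (Arr.proj hlt' j')
                        = projPath G b' j' from (projPath_eq hlt' j').symm]
                      erw [hP b' S' hS' hlt' j' hT']
                      exact Vc V he
                  | @cons w1' c1' p₁' e₁' =>
                      obtain ⟨w1'v⟩ := w1'
                      change Arr G _ _ at e₁'
                      cases e₁' with
                      | proj h2 j2 => exact absurd hlt' (by simp)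
                      | gen β' =>
                          have h' : CTree.node α ⟨0, Nat.one_pos⟩
                                ((S : CompOb.of G n ⟶ CompOb.of G b) ≫ (phi G).map p)
                              = CTree.node β' j'
                                ((S' : CompOb.of G n ⟶ CompOb.of G b') ≫ (phi G).map p₁') :=
                            congrFun he ⟨0, Nat.one_pos⟩
                          obtain ⟨h1, h2, h3, h4, h5⟩ := node_inj h'
                          erw [← h2] at hlt'
                          exact absurd hlt' (by simp)
          | proj hlt j =>
              change Arr G _ _ at e'
              cases e' with
              | gen α' =>
                  cases p with
                  | nil =>
                      have hT : (fun _ : Fin 1 => S j) ∈ sFilt G n (k+1) 1 :=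
                        fun _ => hS j
                      erw [KL V hP hD S' hS' (Quiver.Path.cons p' (Arr.gen α')) (he ▸ hT)]
                      conv_lhs => erw [show Quiver.Path.cons Quiver.Path.nil (Arr.proj hlt j)
                        = projPath G b j from (projPath_eq hlt j).symm]
                      erw [hP b S hS hlt j hT]
                      exact Vc V he
                  | @cons w1 c1 p₁ e₁ =>
                      obtain ⟨w1v⟩ := w1
                      change Arr G _ _ at e₁
                      cases e₁ with
                      | proj h2 j2 => exact absurd hlt (by simp)
                      | gen β =>
                          have h' : CTree.node β j
                                ((S : CompOb.of G n ⟶ CompOb.of G b) ≫ (phi G).map p₁)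
                              = CTree.node α' ⟨0, Nat.one_pos⟩
                                ((S' : CompOb.of G n ⟶ CompOb.of G b') ≫ (phi G).map p') :=
                            congrFun he ⟨0, Nat.one_pos⟩
                          obtain ⟨h1, h2, h3, h4, h5⟩ := node_inj h'
                          erw [h2] at hlt
                          exact absurd hlt (by simp)
              | proj hlt' j' =>
                  cases p with
                  | nil =>
                      have hT : (fun _ : Fin 1 => S j) ∈ sFilt G n (k+1) 1 :=
                        fun _ => hS j
                      cases p' with
                      | nil =>
                          have hT' : (fun _ : Fin 1 => S' j') ∈ sFilt G n (k+1) 1 :=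
                            fun _ => hS' j'
                          conv_lhs => erw [show Quiver.Path.cons Quiver.Path.nil (Arr.proj hlt j)
                            = projPath G b j from (projPath_eq hlt j).symm]
                          conv_rhs => erw [show Quiver.Path.cons Quiver.Path.nil (Arr.proj hlt' j')
                            = projPath G b' j' from (projPath_eq hlt' j').symm]
                          erw [hP b S hS hlt j hT, hP b' S' hS' hlt' j' hT']
                          exact Vc V he
                      | @cons w1' c1' p₁' e₁' =>
                          obtain ⟨w1'v⟩ := w1'
                          change Arr G _ _ at e₁'
                          cases e₁' with
                          | proj h2 j2 => exact absurd hlt' (by simp)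
                          | gen β' =>
                              have hnode : (fun _ : Fin 1 => CTree.node β' j'
                                  ((S' : CompOb.of G n ⟶ CompOb.of G b') ≫ (phi G).map p₁'))
                                  ∈ Filt G n k 1 := by
                                erw [show (fun _ : Fin 1 => CTree.node β' j'
                                    ((S' : CompOb.of G n ⟶ CompOb.of G b') ≫ (phi G).map p₁'))
                                  = fun _ : Fin 1 => S j from funext fun _ =>
                                    (congrFun he ⟨0, Nat.one_pos⟩).symm]
                                exact hS j
                              have hR1 : ((S' : CompOb.of G n ⟶ CompOb.of G b')
                                  ≫ (phi G).map p₁') ∈ Filt G n k w1'v :=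
                                Hlem k β' j' _ hnode
                              have hE : (((S' : CompOb.of G n ⟶ CompOb.of G b')
                                    ≫ (phi G).map p₁' : CompOb.of G n ⟶ CompOb.of G w1'v)
                                    ≫ (phi G).map (Quiver.Hom.toPath (V := FreeOb G) (Arr.gen β'))
                                    : CompHom G n w'v)
                                  = (S' : CompOb.of G n ⟶ CompOb.of G b')
                                    ≫ (phi G).map (Quiver.Path.cons p₁' (Arr.gen β')) := by
                                erw [phi_map_toPath]
                                rfl
                              have hR : ((S' : CompOb.of G n ⟶ CompOb.of G b')
                                  ≫ (phi G).map (Quiver.Path.cons p₁' (Arr.gen β')))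
                                  ∈ Filt G n k w'v :=
                                hE ▸ Filt.closed G n k hR1
                                  (Quiver.Hom.toPath (V := FreeOb G) (Arr.gen β'))
                              have hRs := Filt.subset_sFilt G n k w'v hR
                              conv_rhs => erw [cons_eq_comp (Quiver.Path.cons p₁' (Arr.gen β'))
                                (Arr.proj hlt' j'), X.map_comp, NatTrans.comp_app,
                                types_comp_apply]
                              erw [KL V hP hD S' hS' (Quiver.Path.cons p₁' (Arr.gen β')) hRs]
                              conv_rhs => erw [show Quiver.Hom.toPath (V := FreeOb G)
                                (Arr.proj hlt' j') = projPath G w'v j' from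
                                (projPath_eq hlt' j').symm]
                              erw [hP w'v _ hRs hlt' j' (by
                                show ((S' : CompOb.of G n ⟶ CompOb.of G b') ≫ (phi G).map
                                  (Quiver.Path.cons (Quiver.Path.cons p₁' (Arr.gen β'))
                                    (Arr.proj hlt' j')) : CompHom G n 1) ∈ sFilt G n (k+1) 1
                                erw [← he]
                                exact hT)]
                              conv_lhs => erw [show Quiver.Path.cons Quiver.Path.nil
                                (Arr.proj hlt j) = projPath G b j from (projPath_eq hlt j).symm]
                              erw [hP b S hS hlt j hT]
                              exact Vc V he
                  | @cons w1 c1 p₁ e₁ =>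
                      obtain ⟨w1v⟩ := w1
                      change Arr G _ _ at e₁
                      cases e₁ with
                      | proj h2 j2 => exact absurd hlt (by simp)
                      | gen β =>
                          cases p' with
                          | nil =>
                              have hT' : (fun _ : Fin 1 => S' j') ∈ sFilt G n (k+1) 1 :=
                                fun _ => hS' j'
                              have hnode : (fun _ : Fin 1 => CTree.node β j
                                  ((S : CompOb.of G n ⟶ CompOb.of G b) ≫ (phi G).map p₁))
                                  ∈ Filt G n k 1 := by
                                erw [show (fun _ : Fin 1 => CTree.node β j
                                    ((S : CompOb.of G n ⟶ CompOb.of G b) ≫ (phi G).map p₁))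
                                  = fun _ : Fin 1 => S' j' from funext fun _ =>
                                    congrFun he ⟨0, Nat.one_pos⟩]
                                exact hS' j'
                              have hR1 : ((S : CompOb.of G n ⟶ CompOb.of G b)
                                  ≫ (phi G).map p₁) ∈ Filt G n k w1v :=
                                Hlem k β j _ hnode
                              have hE : (((S : CompOb.of G n ⟶ CompOb.of G b)
                                    ≫ (phi G).map p₁ : CompOb.of G n ⟶ CompOb.of G w1v)
                                    ≫ (phi G).map (Quiver.Hom.toPath (V := FreeOb G) (Arr.gen β))
                                    : CompHom G n wv)
                                  = (S : CompOb.of G n ⟶ CompOb.of G b)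
                                    ≫ (phi G).map (Quiver.Path.cons p₁ (Arr.gen β)) := by
                                erw [phi_map_toPath]
                                rfl
                              have hR : ((S : CompOb.of G n ⟶ CompOb.of G b)
                                  ≫ (phi G).map (Quiver.Path.cons p₁ (Arr.gen β)))
                                  ∈ Filt G n k wv :=
                                hE ▸ Filt.closed G n k hR1
                                  (Quiver.Hom.toPath (V := FreeOb G) (Arr.gen β))
                              have hRs := Filt.subset_sFilt G n k wv hR
                              conv_lhs => erw [cons_eq_comp (Quiver.Path.cons p₁ (Arr.gen β))
                                (Arr.proj hlt j), X.map_comp, NatTrans.comp_app,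
                                types_comp_apply]
                              erw [KL V hP hD S hS (Quiver.Path.cons p₁ (Arr.gen β)) hRs]
                              conv_lhs => erw [show Quiver.Hom.toPath (V := FreeOb G)
                                (Arr.proj hlt j) = projPath G wv j from
                                (projPath_eq hlt j).symm]
                              erw [hP wv _ hRs hlt j (by
                                show ((S : CompOb.of G n ⟶ CompOb.of G b) ≫ (phi G).map
                                  (Quiver.Path.cons (Quiver.Path.cons p₁ (Arr.gen β))
                                    (Arr.proj hlt j)) : CompHom G n 1) ∈ sFilt G n (k+1) 1
                                erw [he]
                                exact hT')]
                              conv_rhs => erw [show Quiver.Path.cons Quiver.Path.nil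
                                (Arr.proj hlt' j') = projPath G b' j' from
                                (projPath_eq hlt' j').symm]
                              erw [hP b' S' hS' hlt' j' hT']
                              exact Vc V he
                          | @cons w1' c1' p₁' e₁' =>
                              obtain ⟨w1'v⟩ := w1'
                              change Arr G _ _ at e₁'
                              cases e₁' with
                              | proj h2 j2 => exact absurd hlt' (by simp)
                              | gen β' =>
                                  have h' : CTree.node β j
                                        ((S : CompOb.of G n ⟶ CompOb.of G b) ≫ (phi G).map p₁)
                                      = CTree.node β' j'
                                        ((S' : CompOb.of G n ⟶ CompOb.of G b')
                                          ≫ (phi G).map p₁') :=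
                                    congrFun he ⟨0, Nat.one_pos⟩
                                  obtain ⟨h1, h2, h3, h4, h5⟩ := node_inj h'
                                  subst h1
                                  subst h2
                                  have hβ := eq_of_heq h3
                                  subst hβ
                                  have hj := eq_of_heq h4
                                  subst hj
                                  have hR1 := eq_of_heq h5
                                  have hRR : ((S : CompOb.of G n ⟶ CompOb.of G b)
                                      ≫ (phi G).map (Quiver.Path.cons p₁ (Arr.gen β))
                                      : CompHom G n wv)
                                      = (S' : CompOb.of G n ⟶ CompOb.of G b')
                                      ≫ (phi G).map (Quiver.Path.cons p₁' (Arr.gen β)) := by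
                                    funext l
                                    exact congrArg (fun ts => CTree.node β l ts) hR1
                                  conv_lhs => erw [cons_eq_comp (Quiver.Path.cons p₁ (Arr.gen β))
                                    (Arr.proj hlt j), X.map_comp, NatTrans.comp_app,
                                    types_comp_apply]
                                  conv_rhs => erw [cons_eq_comp (Quiver.Path.cons p₁' (Arr.gen β))
                                    (Arr.proj hlt' j), X.map_comp, NatTrans.comp_app,
                                    types_comp_apply]
                                  erw [ih (Quiver.Path.cons p₁' (Arr.gen β)) hRR]

end VSec


section Glue

variable {G : GenData} {n : ℕ+} {k : ℕ} {X : FreeST G ⥤ SSet} {K : SSet}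

/-- The object `[a]` of the initial theory `P`, as an object of `PCat`. -/
def POb (a : ℕ+) : PCat := (⟨a⟩ : Ob)

theorem Jmap_projPath {a : ℕ+} (h : 1 < (a : ℕ)) (j : Fin a) :
    (Jfree G).map (projPath emptyGen a j) = projPath G a j := by
  rw [projPath, dif_pos h, projPath, dif_pos h]
  exact Paths.lift_toPath _ _

variable (σ : prodConst (FiltDiag G n k) K ⟶ X)
variable (τ : prodConst (sFiltDiag G n (k+1)) K ⟶ resP G X)

def tVal (a : ℕ+) (S : CompHom G n a) (hS : S ∈ sFilt G n (k+1) a)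
    (y : SimplexCategoryᵒᵖ) (κ : K.obj y) : (X.obj (FreeST.of G a)).obj y :=
  (τ.app (POb a)).app y ⟨⟨S, hS⟩, κ⟩

def sVal (a : ℕ+) (R : CompHom G n a) (hR : R ∈ Filt G n k a)
    (y : SimplexCategoryᵒᵖ) (κ : K.obj y) : (X.obj (FreeST.of G a)).obj y :=
  (σ.app (FreeST.of G a)).app y ⟨⟨R, hR⟩, κ⟩

theorem tProj (a : ℕ+) (S : CompHom G n a) (hS : S ∈ sFilt G n (k+1) a)
    (h : 1 < (a : ℕ)) (j : Fin a) (h2 : (fun _ : Fin 1 => S j) ∈ sFilt G n (k+1) 1)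
    (y : SimplexCategoryᵒᵖ) (κ : K.obj y) :
    (X.map (projPath G a j)).app y (tVal τ a S hS y κ) = tVal τ 1 (fun _ => S j) h2 y κ := by
  have h1 : (Jfree G).map (projPath emptyGen a j) = projPath G a j := Jmap_projPath h j
  have h2' : ((S : CompOb.of G n ⟶ CompOb.of G a)
      ≫ (phi G).map ((Jfree G).map (projPath emptyGen a j)) : CompHom G n 1)
      = fun _ => S j := by
    rw [h1, projPath, dif_pos h]
    refine (congrArg (fun t => (S : CompOb.of G n ⟶ CompOb.of G a) ≫ t)
      (phi_map_toPath G (projArr G h j))).trans ?_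
    rfl
  refine (show (X.map (projPath G a j)).app y (tVal τ a S hS y κ)
      = (X.map ((Jfree G).map (projPath emptyGen a j))).app y (tVal τ a S hS y κ) by
        rw [h1]; rfl).trans ?_
  refine (natApply τ (show POb a ⟶ POb 1 from projPath emptyGen a j) y ⟨⟨S, hS⟩, κ⟩).symm.trans ?_
  exact congrArg ((τ.app (POb 1)).app y) (Prod.ext (Subtype.ext h2') rfl)

theorem tEqs (hst : CategoryTheory.Functor.whiskerLeft (Jfree G) σ
      = prodConst.mapX (filtInclS G n k) K ≫ τ)
    (a : ℕ+) (R : CompHom G n a) (hR : R ∈ Filt G n k a)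
    (y : SimplexCategoryᵒᵖ) (κ : K.obj y) :
    tVal τ a R (Filt.subset_sFilt G n k a hR) y κ = sVal σ a R hR y κ := by
  have h2 := NatTrans.congr_app (NatTrans.congr_app hst (POb a)) y
  exact (types_congr_hom h2 ⟨⟨R, hR⟩, κ⟩).symm

theorem tD (hst : CategoryTheory.Functor.whiskerLeft (Jfree G) σ
      = prodConst.mapX (filtInclS G n k) K ≫ τ)
    (a b : ℕ+) (R : CompHom G n a) (hR : R ∈ Filt G n k a)
    (h1 : R ∈ sFilt G n (k+1) a) (χ : FreeST.of G a ⟶ FreeST.of G b)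
    (h2 : ((R : CompOb.of G n ⟶ CompOb.of G a) ≫ (phi G).map χ : CompHom G n b)
      ∈ sFilt G n (k+1) b)
    (y : SimplexCategoryᵒᵖ) (κ : K.obj y) :
    (X.map χ).app y (tVal τ a R h1 y κ)
      = tVal τ b ((R : CompOb.of G n ⟶ CompOb.of G a) ≫ (phi G).map χ) h2 y κ := by
  calc (X.map χ).app y (tVal τ a R h1 y κ)
      = (X.map χ).app y (sVal σ a R hR y κ) :=
        congrArg ((X.map χ).app y) (tEqs σ τ hst a R hR y κ)
    _ = sVal σ b ((R : CompOb.of G n ⟶ CompOb.of G a) ≫ (phi G).map χ)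
        (Filt.closed G n k hR χ) y κ := (natApply σ χ y ⟨⟨R, hR⟩, κ⟩).symm
    _ = tVal τ b ((R : CompOb.of G n ⟶ CompOb.of G a) ≫ (phi G).map χ) h2 y κ :=
        (tEqs σ τ hst b _ (Filt.closed G n k hR χ) y κ).symm

end Glue

section Glue2

variable {G : GenData} {n : ℕ+} {k : ℕ} {X : FreeST G ⥤ SSet} {K : SSet}
variable (σ : prodConst (FiltDiag G n k) K ⟶ X)
variable (τ : prodConst (sFiltDiag G n (k+1)) K ⟶ resP G X)

/-- A chosen decomposition of an element of `D̄_n^{k+1}[m]`. -/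
def decEx {m : ℕ+} {T : CompHom G n m} (hT : T ∈ Filt G n (k+1) m) :
    Σ' (b : ℕ+) (S : CompHom G n b) (ψ : FreeST.of G b ⟶ FreeST.of G m),
      (S ∈ sFilt G n (k+1) b) ∧
      T = (S : CompOb.of G n ⟶ CompOb.of G b) ≫ (phi G).map ψ :=
  Classical.choice (by
    obtain ⟨b, S, ψ, h1, h2⟩ := hT
    exact ⟨⟨b, S, ψ, h1, h2⟩⟩)

def gVal {m : ℕ+} {T : CompHom G n m} (hT : T ∈ Filt G n (k+1) m)
    (y : SimplexCategoryᵒᵖ) (κ : K.obj y) : (X.obj (FreeST.of G m)).obj y :=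
  (X.map (decEx hT).2.2.1).app y
    (tVal τ (decEx hT).1 (decEx hT).2.1 (decEx hT).2.2.2.1 y κ)

theorem gVal_eq (hst : CategoryTheory.Functor.whiskerLeft (Jfree G) σ
      = prodConst.mapX (filtInclS G n k) K ≫ τ)
    {m b : ℕ+} {T : CompHom G n m} (hT : T ∈ Filt G n (k+1) m)
    (S : CompHom G n b) (hS : S ∈ sFilt G n (k+1) b)
    (ψ : FreeST.of G b ⟶ FreeST.of G m)
    (he : T = (S : CompOb.of G n ⟶ CompOb.of G b) ≫ (phi G).map ψ)
    (y : SimplexCategoryᵒᵖ) (κ : K.obj y) :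
    gVal τ hT y κ = (X.map ψ).app y (tVal τ b S hS y κ) := by
  show (X.map (decEx hT).2.2.1).app y
    (tVal τ (decEx hT).1 (decEx hT).2.1 (decEx hT).2.2.2.1 y κ) = _
  obtain ⟨b₀, S₀, ψ₀, h₀, he₀⟩ := decEx hT
  exact Elem (fun a S hS => tVal τ a S hS y κ)
    (fun a S hS h j h2 => tProj τ a S hS h j h2 y κ)
    (fun a b R hR h1 χ h2 => tD σ τ hst a b R hR h1 χ h2 y κ)
    S₀ S h₀ hS ψ₀ ψ (he₀.symm.trans he)

theorem tNat {b : ℕ+} (S : CompHom G n b) (hS : S ∈ sFilt G n (k+1) b)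
    {y y' : SimplexCategoryᵒᵖ} (θ : y ⟶ y') (κ : K.obj y) :
    tVal τ b S hS y' (K.map θ κ) = ((X.obj (FreeST.of G b))).map θ (tVal τ b S hS y κ) :=
  types_congr_hom ((τ.app (POb b)).naturality θ) ⟨⟨S, hS⟩, κ⟩

/-- The glued natural transformation on `D̄_n^{k+1}`. -/
def glueNat (hst : CategoryTheory.Functor.whiskerLeft (Jfree G) σ
      = prodConst.mapX (filtInclS G n k) K ≫ τ) :
    prodConst (FiltDiag G n (k+1)) K ⟶ X where
  app m :=
    { app := fun y => ↾(fun p => gVal τ p.1.2 y p.2)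
      naturality := fun y y' θ => by
        refine ConcreteCategory.hom_ext _ _ fun p => ?_
        obtain ⟨⟨T, hT⟩, κ⟩ := p
        show gVal τ hT y' (K.map θ κ) = (X.obj m).map θ (gVal τ hT y κ)
        show (X.map (decEx hT).2.2.1).app y'
            (tVal τ (decEx hT).1 (decEx hT).2.1 (decEx hT).2.2.2.1 y' (K.map θ κ)) = _
        rw [tNat τ _ _ θ κ]
        exact types_congr_hom ((X.map (decEx hT).2.2.1).naturality θ) _ }
  naturality := fun m m' ψ₁ => by
    apply NatTrans.ext
    funext y; refine ConcreteCategory.hom_ext _ _ fun p => ?_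
    obtain ⟨⟨T, hT⟩, κ⟩ := p
    show gVal τ (Filt.closed G n (k+1) hT ψ₁) y κ
      = (X.map ψ₁).app y (gVal τ hT y κ)
    rw [gVal_eq σ τ hst hT (decEx hT).2.1 (decEx hT).2.2.2.1 (decEx hT).2.2.1
      (decEx hT).2.2.2.2 y κ]
    rw [gVal_eq σ τ hst (Filt.closed G n (k+1) hT ψ₁) (decEx hT).2.1
      (decEx hT).2.2.2.1 ((decEx hT).2.2.1 ≫ ψ₁)
      (by
        conv_lhs => rw [(decEx hT).2.2.2.2]
        erw [Category.assoc, Functor.map_comp]; rfl) y κ]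
    erw [Functor.map_comp]
    rfl

end Glue2

section Main

variable {G : GenData} {n : ℕ+} {k : ℕ} {X : FreeST G ⥤ SSet} {K : SSet}

theorem glueNat_congr {σ₁ σ₂ : prodConst (FiltDiag G n k) K ⟶ X}
    {τ₁ τ₂ : prodConst (sFiltDiag G n (k+1)) K ⟶ resP G X}
    (hσ : σ₁ = σ₂) (hτ : τ₁ = τ₂) (h₁ : _) (h₂ : _) :
    glueNat σ₁ τ₁ h₁ = glueNat σ₂ τ₂ h₂ := by
  subst hσ; subst hτ; rfl

theorem glue_mapK {K' : SSet} (ρ : K' ⟶ K) (σ : prodConst (FiltDiag G n k) K ⟶ X)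
    (τ : prodConst (sFiltDiag G n (k+1)) K ⟶ resP G X)
    (hst : CategoryTheory.Functor.whiskerLeft (Jfree G) σ
      = prodConst.mapX (filtInclS G n k) K ≫ τ)
    (hst' : CategoryTheory.Functor.whiskerLeft (Jfree G) (prodConst.mapK (FiltDiag G n k) ρ ≫ σ)
      = prodConst.mapX (filtInclS G n k) K'
        ≫ (prodConst.mapK (sFiltDiag G n (k+1)) ρ ≫ τ)) :
    glueNat (prodConst.mapK (FiltDiag G n k) ρ ≫ σ)
        (prodConst.mapK (sFiltDiag G n (k+1)) ρ ≫ τ) hst'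
      = prodConst.mapK (FiltDiag G n (k+1)) ρ ≫ glueNat σ τ hst := by
  apply NatTrans.ext
  funext m
  apply NatTrans.ext
  funext y; refine ConcreteCategory.hom_ext _ _ fun p => ?_
  rfl

theorem mapping_complex_square_is_pullback_aux (G : GenData) (n : ℕ+) (k : ℕ)
    (X : FreeST G ⥤ SSet) :
    IsPullback
      (MapCx.pre (filtIncl G n k) X)
      (MapCx.whisk (Jfree G) (FiltDiag G n (k+1)) X ≫
        MapCx.pre (sFiltIncl G n k) (resP G X))
      (MapCx.whisk (Jfree G) (FiltDiag G n k) X)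
      (MapCx.pre (filtInclS G n k) (resP G X)) := by
  have comm : (MapCx.pre (filtIncl G n k) X) ≫ (MapCx.whisk (Jfree G) (FiltDiag G n k) X)
      = (MapCx.whisk (Jfree G) (FiltDiag G n (k+1)) X ≫
          MapCx.pre (sFiltIncl G n k) (resP G X)) ≫ (MapCx.pre (filtInclS G n k) (resP G X)) := by
    apply NatTrans.ext
    funext x; refine ConcreteCategory.hom_ext _ _ fun t => ?_
    apply NatTrans.ext
    funext a
    apply NatTrans.ext
    funext yy; refine ConcreteCategory.hom_ext _ _ fun pt => ?_
    rfl
  refine IsPullback.of_isLimit' ⟨comm⟩ ?_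
  refine PullbackCone.IsLimit.mk _ ?lift ?facl ?facr ?uniq
  case lift =>
    intro s
    refine
      { app := fun x => ↾(fun w => glueNat (s.fst.app x w) (s.snd.app x w)
          (types_congr_hom (NatTrans.congr_app s.condition x) w))
        naturality := fun x x' θ => ?_ }
    refine ConcreteCategory.hom_ext _ _ fun w => ?_
    show glueNat (s.fst.app x' ((s.pt.map θ) w)) (s.snd.app x' ((s.pt.map θ) w))
        (types_congr_hom (NatTrans.congr_app s.condition x') ((s.pt.map θ) w))
      = (MapCx (FiltDiag G n (k+1)) X).map θ
        (glueNat (s.fst.app x w) (s.snd.app x w)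
          (types_congr_hom (NatTrans.congr_app s.condition x) w))
    have hσ : s.fst.app x' ((s.pt.map θ) w)
        = prodConst.mapK (FiltDiag G n k) (stdMap θ) ≫ s.fst.app x w :=
      types_congr_hom (s.fst.naturality θ) w
    have hτ : s.snd.app x' ((s.pt.map θ) w)
        = prodConst.mapK (sFiltDiag G n (k+1)) (stdMap θ) ≫ s.snd.app x w :=
      types_congr_hom (s.snd.naturality θ) w
    rw [glueNat_congr hσ hτ
      (types_congr_hom (NatTrans.congr_app s.condition x') ((s.pt.map θ) w))
      (by
        rw [← hσ, ← hτ]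
        exact types_congr_hom (NatTrans.congr_app s.condition x') ((s.pt.map θ) w))]
    exact glue_mapK (stdMap θ) (s.fst.app x w) (s.snd.app x w)
      (types_congr_hom (NatTrans.congr_app s.condition x) w) _
  case facl =>
    intro s
    apply NatTrans.ext
    funext x; refine ConcreteCategory.hom_ext _ _ fun w => ?_
    apply NatTrans.ext
    funext mm
    apply NatTrans.ext
    funext y; refine ConcreteCategory.hom_ext _ _ fun p => ?_
    obtain ⟨⟨R, hR⟩, κ⟩ := p
    show gVal (s.snd.app x w) (Filt.mono G n k (Ob.val mm) hR) y κ
      = ((s.fst.app x w).app mm).app y ⟨⟨R, hR⟩, κ⟩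
    rw [gVal_eq (s.fst.app x w) (s.snd.app x w)
      (types_congr_hom (NatTrans.congr_app s.condition x) w)
      (Filt.mono G n k (Ob.val mm) hR) R (fun j => Filt.comp_proj G n k hR j)
      (𝟙 (FreeST.of G (Ob.val mm)))
      (by erw [CategoryTheory.Functor.map_id, Category.comp_id]) y κ]
    rw [CategoryTheory.Functor.map_id]
    exact tEqs (s.fst.app x w) (s.snd.app x w)
      (types_congr_hom (NatTrans.congr_app s.condition x) w) (Ob.val mm) R hR y κ
  case facr =>
    intro s
    apply NatTrans.ext
    funext x; refine ConcreteCategory.hom_ext _ _ fun w => ?_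
    apply NatTrans.ext
    funext a
    apply NatTrans.ext
    funext y; refine ConcreteCategory.hom_ext _ _ fun p => ?_
    obtain ⟨⟨S, hS⟩, κ⟩ := p
    show gVal (s.snd.app x w) (sFilt.subset_Filt G n k (Ob.val a) hS) y κ
      = ((s.snd.app x w).app a).app y ⟨⟨S, hS⟩, κ⟩
    rw [gVal_eq (s.fst.app x w) (s.snd.app x w)
      (types_congr_hom (NatTrans.congr_app s.condition x) w)
      (sFilt.subset_Filt G n k (Ob.val a) hS) S hS
      (𝟙 (FreeST.of G (Ob.val a)))
      (by erw [CategoryTheory.Functor.map_id, Category.comp_id]) y κ]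
    rw [CategoryTheory.Functor.map_id]
    rfl
  case uniq =>
    intro s m₀ h1 h2
    apply NatTrans.ext
    funext x; refine ConcreteCategory.hom_ext _ _ fun w => ?_
    apply NatTrans.ext
    funext mm
    apply NatTrans.ext
    funext y; refine ConcreteCategory.hom_ext _ _ fun p => ?_
    obtain ⟨⟨T, hT⟩, κ⟩ := p
    have hx2 := types_congr_hom (NatTrans.congr_app h2 x) w
    have hτpt := types_congr_hom (NatTrans.congr_app (NatTrans.congr_app hx2
      (POb (decEx hT).1)) y) ⟨⟨(decEx hT).2.1, (decEx hT).2.2.2.1⟩, κ⟩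
    refine (show ((m₀.app x w).app mm).app y ⟨⟨T, hT⟩, κ⟩
        = ((m₀.app x w).app mm).app y
            (((prodConst (FiltDiag G n (k+1)) (stdS x)).map (decEx hT).2.2.1).app y
              ⟨⟨(decEx hT).2.1, sFilt.subset_Filt G n k _ (decEx hT).2.2.2.1⟩, κ⟩) from
          congrArg (((m₀.app x w).app mm).app y)
            (Prod.ext (Subtype.ext (decEx hT).2.2.2.2) rfl)).trans ?_
    refine (natApply (m₀.app x w) (decEx hT).2.2.1 y _).trans ?_
    refine (congrArg ((X.map (decEx hT).2.2.1).app y) hτpt).trans ?_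
    exact rfl

end Main


/-! ### STATEMENT 13
The square of simplicial mapping complexes induced by the inclusions of the
filtration stages of `D̄_n` is a pullback square of simplicial sets. -/
theorem mapping_complex_square_is_pullback (G : GenData) (n : ℕ+) (k : ℕ)
    (X : FreeST G ⥤ SSet) :
    IsPullback
      (MapCx.pre (filtIncl G n k) X)
      (MapCx.whisk (Jfree G) (FiltDiag G n (k+1)) X ≫
        MapCx.pre (sFiltIncl G n k) (resP G X))
      (MapCx.whisk (Jfree G) (FiltDiag G n k) X)
      (MapCx.pre (filtInclS G n k) (resP G X)) :=
  mapping_complex_square_is_pullback_aux G n k X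

end SemiThPaper
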